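/- Let M be a matroid on a finite set E with rank function r and let F_1, …, F_m ⊆ E. There exists a base B of M with |B ∩ F_i| = r(F_i) for all i ∈ {1,…,m} if and only if ∑_{σ ⊆ {1,…,m}} r_{M/F_σ⁺}(F_σ⁻ ∖ F_σ⁺) = r(E), where r_{M/F_σ⁺} denotes the rank function of the contraction M/F_σ⁺. -/

import Mathlib

open Finset

/-- A (finite) matroid on a finite ground set `E`, given by a submodular rank function,
following the matroid rank axioms (R1)-(R3). -/
structure FinMatroid (α : Type*) [DecidableEq α] where
  E : Finset α
  r : Finset α → ℕ
  r_le_card : ∀ ⦃A : Finset α⦄, A ⊆ E → r A ≤ A.card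
  r_mono : ∀ ⦃A B : Finset α⦄, A ⊆ B → B ⊆ E → r A ≤ r B
  r_submod : ∀ ⦃A B : Finset α⦄, A ⊆ E → B ⊆ E → r (A ∪ B) + r (A ∩ B) ≤ r A + r B

namespace FinMatroid

variable {α : Type*} [DecidableEq α]

/-- A set is independent if it is a subset of the ground set whose rank is its cardinality. -/
def Indep (M : FinMatroid α) (A : Finset α) : Prop :=
  A ⊆ M.E ∧ M.r A = A.card

/-- A base is a maximal independent set. -/
def Base (M : FinMatroid α) (B : Finset α) : Prop :=
  M.Indep B ∧ ∀ ⦃A : Finset α⦄, M.Indep A → B ⊆ A → A = B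

/-- A basis of `A` is a maximal independent subset of `A`. -/
def BasisOf (M : FinMatroid α) (I A : Finset α) : Prop :=
  I ⊆ A ∧ M.Indep I ∧ ∀ ⦃J : Finset α⦄, J ⊆ A → M.Indep J → I ⊆ J → J = I

/-- A flat is a set `F` with `F = {s ∈ E : r (F ∪ {s}) = r F}`. -/
def Flat (M : FinMatroid α) (F : Finset α) : Prop :=
  F = M.E.filter (fun s => M.r (F ∪ {s}) = M.r F)

/-- A matroid is loopless if every singleton of the ground set has rank one. -/
def Loopless (M : FinMatroid α) : Prop :=
  ∀ s ∈ M.E, M.r {s} = 1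

/-- The restriction `M|A` of `M` to `A`. -/
def restrict (M : FinMatroid α) (A : Finset α) : FinMatroid α where
  E := A ∩ M.E
  r := M.r
  r_le_card := fun _ h => M.r_le_card (h.trans inter_subset_right)
  r_mono := fun _ _ h h' => M.r_mono h (h'.trans inter_subset_right)
  r_submod := fun _ _ h h' =>
    M.r_submod (h.trans inter_subset_right) (h'.trans inter_subset_right)

/-- The contraction `M/C` of `C` in `M`, with rank function `A ↦ r (A ∪ C) - r C`. -/
def contract (M : FinMatroid α) (C : Finset α) : FinMatroid α where
  E := M.E \ C
  r := fun A => M.r (A ∪ C ∩ M.E) - M.r (C ∩ M.E)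
  r_le_card := by
    intro A hA
    have hAE : A ⊆ M.E := hA.trans sdiff_subset
    have hc : C ∩ M.E ⊆ M.E := inter_subset_right
    have h1 := M.r_submod hAE hc
    have h2 := M.r_le_card hAE
    beta_reduce
    omega
  r_mono := by
    intro A B hAB hB
    have hBE : B ⊆ M.E := hB.trans sdiff_subset
    have hc : C ∩ M.E ⊆ M.E := inter_subset_right
    have h1 : M.r (A ∪ C ∩ M.E) ≤ M.r (B ∪ C ∩ M.E) :=
      M.r_mono (union_subset_union hAB (Finset.Subset.refl _)) (union_subset hBE hc)
    beta_reduce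
    omega
  r_submod := by
    intro A B hA hB
    have hAE : A ⊆ M.E := hA.trans sdiff_subset
    have hBE : B ⊆ M.E := hB.trans sdiff_subset
    have hc : C ∩ M.E ⊆ M.E := inter_subset_right
    have hAc : A ∪ C ∩ M.E ⊆ M.E := union_subset hAE hc
    have hBc : B ∪ C ∩ M.E ⊆ M.E := union_subset hBE hc
    have h1 := M.r_submod hAc hBc
    have e1 : (A ∪ C ∩ M.E) ∪ (B ∪ C ∩ M.E) = (A ∪ B) ∪ C ∩ M.E := by
      ext x; simp only [Finset.mem_union, Finset.mem_inter]; tauto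
    have e2 : (A ∪ C ∩ M.E) ∩ (B ∪ C ∩ M.E) = (A ∩ B) ∪ C ∩ M.E := by
      ext x; simp only [Finset.mem_union, Finset.mem_inter]; tauto
    rw [e1, e2] at h1
    have hABc : (A ∩ B) ∪ C ∩ M.E ⊆ M.E := union_subset (inter_subset_left.trans hAE) hc
    have hABc' : (A ∪ B) ∪ C ∩ M.E ⊆ M.E := union_subset (union_subset hAE hBE) hc
    have h2 : M.r (C ∩ M.E) ≤ M.r ((A ∩ B) ∪ C ∩ M.E) := M.r_mono subset_union_right hABc
    have h3 : M.r (C ∩ M.E) ≤ M.r (A ∪ C ∩ M.E) := M.r_mono subset_union_right hAc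
    have h4 : M.r (C ∩ M.E) ≤ M.r (B ∪ C ∩ M.E) := M.r_mono subset_union_right hBc
    have h5 : M.r (C ∩ M.E) ≤ M.r ((A ∪ B) ∪ C ∩ M.E) := M.r_mono subset_union_right hABc'
    beta_reduce
    omega

/-- `A` is a separator of `M` if `r A + r (E \ A) = r E`. -/
def Separator (M : FinMatroid α) (A : Finset α) : Prop :=
  A ⊆ M.E ∧ M.r A + M.r (M.E \ A) = M.r M.E

/-- `M` is connected (inseparable) if its ground set is nonempty and its only
separators are `∅` and `E`. -/
def Connected (M : FinMatroid α) : Prop :=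
  M.E.Nonempty ∧ ∀ A : Finset α, M.Separator A → A = ∅ ∨ A = M.E

/-- For connected `M`, a set `∅ ≠ F ⊊ E` is non-degenerate if both `M|F` and `M/F`
are connected. -/
def Nondegenerate (M : FinMatroid α) (F : Finset α) : Prop :=
  F ≠ ∅ ∧ F ⊂ M.E ∧ (M.restrict F).Connected ∧ (M.contract F).Connected

end FinMatroid

noncomputable section

open FinMatroid

/-- The indicator (incidence) vector `1^A ∈ ℝ^α` of a finite set `A`. -/
def indicatorVec {α : Type*} [DecidableEq α] (A : Finset α) : α → ℝ :=
  fun i => if i ∈ A then 1 else 0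

/-- The base polytope of a matroid: the convex hull of the indicator vectors of its bases. -/
def basePolytope {α : Type*} [DecidableEq α] (M : FinMatroid α) : Set (α → ℝ) :=
  convexHull ℝ {x | ∃ B : Finset α, M.Base B ∧ x = indicatorVec B}

/-- `Q` is a face of `P`: either `∅`, or `P` itself, or the subset of `P` where some
linear functional attains its maximum over `P` (an exposed face). -/
def IsFaceOf {α : Type*} (P Q : Set (α → ℝ)) : Prop :=
  Q = ∅ ∨ Q = P ∨ ∃ ℓ : (α → ℝ) →ₗ[ℝ] ℝ, Q = {x ∈ P | ∀ y ∈ P, ℓ y ≤ ℓ x}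

/-- The dimension of a convex set: the dimension of the direction of its affine span. -/
def sdim {α : Type*} (Q : Set (α → ℝ)) : ℕ :=
  Module.finrank ℝ (affineSpan ℝ Q).direction

end

/-- `F_σ⁺ := ⋃_{i ∈ σ} F i`. -/
def Fplus {α : Type*} [DecidableEq α] {m : ℕ} (F : Fin m → Finset α) (σ : Finset (Fin m)) :
    Finset α :=
  σ.sup F

/-- `F_σ⁻ := ⋂_{j ∉ σ} F j`, with the empty intersection equal to the ground set `E`. -/
def Fminus {α : Type*} [DecidableEq α] {m : ℕ} (M : FinMatroid α) (F : Fin m → Finset α)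
    (σ : Finset (Fin m)) : Finset α :=
  M.E.filter (fun x => ∀ j, j ∉ σ → x ∈ F j)

namespace FinMatroid

variable {α : Type*} [DecidableEq α]

lemma r_empty (M : FinMatroid α) : M.r ∅ = 0 :=
  Nat.le_zero.mp (by simpa using M.r_le_card (empty_subset M.E))

lemma r_union_le (M : FinMatroid α) {A B : Finset α} (hA : A ⊆ M.E) (hB : B ⊆ M.E) :
    M.r (A ∪ B) ≤ M.r A + M.r B := by
  have := M.r_submod hA hB; omega

/-- If `X` spans `A`, then adding `A` to any set containing `X` does not increase rank. -/
lemma span_lemma (M : FinMatroid α) {X A Z : Finset α} (hX : X ⊆ M.E) (hA : A ⊆ M.E)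
    (hZ : Z ⊆ M.E) (h : M.r (X ∪ A) ≤ M.r X) : M.r (Z ∪ X ∪ A) ≤ M.r (Z ∪ X) := by
  have hZX : Z ∪ X ⊆ M.E := union_subset hZ hX
  have hXA : X ∪ A ⊆ M.E := union_subset hX hA
  have hsub := M.r_submod hZX hXA
  have e1 : (Z ∪ X) ∪ (X ∪ A) = Z ∪ X ∪ A := by ext x; simp only [mem_union]; tauto
  rw [e1] at hsub
  have hx : M.r X ≤ M.r ((Z ∪ X) ∩ (X ∪ A)) := by
    refine M.r_mono ?_ ((inter_subset_left).trans hZX)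
    intro x hx; simp only [mem_inter, mem_union]; tauto
  omega

lemma indep_subset (M : FinMatroid α) {B I : Finset α} (hB : M.Indep B) (hIB : I ⊆ B) :
    M.Indep I := by
  have hBE := hB.1
  have hIE : I ⊆ M.E := hIB.trans hBE
  refine ⟨hIE, le_antisymm (M.r_le_card hIE) ?_⟩
  have e : I ∪ B \ I = B := union_sdiff_of_subset hIB
  have h1 : M.r B ≤ M.r I + M.r (B \ I) := by
    have h := M.r_union_le hIE (show B \ I ⊆ M.E from (sdiff_subset).trans hBE)
    rw [e] at h; exact h
  have h2 : M.r (B \ I) ≤ (B \ I).card := M.r_le_card ((sdiff_subset).trans hBE)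
  have h3 : (B \ I).card = B.card - I.card := card_sdiff_of_subset hIB
  have h4 : I.card ≤ B.card := card_le_card hIB
  have h5 : M.r B = B.card := hB.2
  omega

lemma base_r_eq (M : FinMatroid α) {B : Finset α} (hB : M.Base B) : M.r B = M.r M.E := by
  have hBE : B ⊆ M.E := hB.1.1
  have step1 : ∀ s ∈ M.E, M.r (B ∪ {s}) ≤ M.r B := by
    intro s hs
    by_contra hlt
    push_neg at hlt
    have hsB : s ∉ B := by
      intro hsB
      have : B ∪ {s} = B := by
        apply union_eq_left.mpr; simp [singleton_subset_iff, hsB]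
      rw [this] at hlt; omega
    have hsub : B ∪ {s} ⊆ M.E := union_subset hBE (by simp [hs])
    have hle : M.r (B ∪ {s}) ≤ M.r B + M.r {s} := M.r_union_le hBE (by simp [hs])
    have h1 : M.r {s} ≤ 1 := by simpa using M.r_le_card (show {s} ⊆ M.E by simp [hs])
    have hcard : (B ∪ {s}).card = B.card + 1 := by
      have e2 : B ∪ {s} = insert s B := by ext x; simp only [mem_union, mem_insert, mem_singleton]; tauto
      rw [e2, card_insert_of_notMem hsB]
    have hindep : M.Indep (B ∪ {s}) := by
      refine ⟨hsub, le_antisymm (M.r_le_card hsub) ?_⟩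
      have := hB.1.2; omega
    have := hB.2 hindep subset_union_left
    have : s ∈ B := by rw [← this]; simp
    exact hsB this
  have step2 : ∀ S : Finset α, S ⊆ M.E → M.r (B ∪ S) ≤ M.r B := by
    intro S
    induction S using Finset.induction_on with
    | empty => intro _; simp
    | @insert a S ha IH =>
      intro hsub
      have haE : a ∈ M.E := hsub (mem_insert_self a S)
      have hSE : S ⊆ M.E := (subset_insert a S).trans hsub
      have h1 : M.r (S ∪ B ∪ {a}) ≤ M.r (S ∪ B) :=
        M.span_lemma hBE (by simp [haE]) hSE (step1 a haE)
      have e : B ∪ insert a S = S ∪ B ∪ {a} := by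
        ext x; simp only [mem_union, mem_insert, mem_singleton]; tauto
      rw [e, union_comm S B] at *
      exact h1.trans (IH hSE)
  have h1 : M.r (B ∪ M.E) ≤ M.r B := step2 M.E (Finset.Subset.refl _)
  have e : B ∪ M.E = M.E := union_eq_right.mpr hBE
  rw [e] at h1
  exact le_antisymm (M.r_mono hBE (Finset.Subset.refl _)) h1

lemma base_card (M : FinMatroid α) {B : Finset α} (hB : M.Base B) : B.card = M.r M.E := by
  rw [← M.base_r_eq hB]; exact hB.1.2.symm

lemma base_of_indep_card (M : FinMatroid α) {I : Finset α} (hI : M.Indep I)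
    (h : I.card = M.r M.E) : M.Base I := by
  refine ⟨hI, fun A hA hIA => ?_⟩
  have h1 : A.card = M.r A := hA.2.symm
  have h2 : M.r A ≤ M.r M.E := M.r_mono hA.1 (Finset.Subset.refl _)
  exact (eq_of_subset_of_card_le hIA (by omega)).symm

lemma exists_base (M : FinMatroid α) : ∃ B, M.Base B := by
  obtain ⟨B, hBmem, hBmax⟩ := Finset.exists_max_image
    (M.E.powerset.filter fun A => M.r A = A.card) Finset.card
    ⟨∅, by simp [M.r_empty]⟩
  simp only [mem_filter, mem_powerset] at hBmem
  refine ⟨B, ⟨hBmem.1, hBmem.2⟩, fun A hA hBA => ?_⟩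
  have : A.card ≤ B.card := hBmax A (by simp only [mem_filter, mem_powerset]; exact ⟨hA.1, hA.2⟩)
  exact (eq_of_subset_of_card_le hBA this).symm

end FinMatroid

section Aux

variable {α : Type*} [DecidableEq α] {m : ℕ}

/-- The part of the partition of `E` indexed by `σ ⊆ S`. -/
def Amin (M : FinMatroid α) (F : Fin m → Finset α) (S σ : Finset (Fin m)) : Finset α :=
  (M.E.filter fun x => ∀ j ∈ S, j ∉ σ → x ∈ F j) \ Fplus F σ

/-- The `σ`-th term of the sum: the rank of `Amin` in the contraction by `F_σ⁺`. -/
def tterm (M : FinMatroid α) (F : Fin m → Finset α) (S σ : Finset (Fin m)) : ℕ :=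
  M.r (Amin M F S σ ∪ Fplus F σ) - M.r (Fplus F σ)

/-- The total sum over `σ ⊆ S`. -/
def TT (M : FinMatroid α) (F : Fin m → Finset α) (S : Finset (Fin m)) : ℕ :=
  ∑ σ ∈ S.powerset, tterm M F S σ

lemma mem_Fplus {F : Fin m → Finset α} {σ : Finset (Fin m)} {x : α} :
    x ∈ Fplus F σ ↔ ∃ j ∈ σ, x ∈ F j := Finset.mem_sup

lemma mem_Amin {M : FinMatroid α} {F : Fin m → Finset α} {S σ : Finset (Fin m)} {x : α} :
    x ∈ Amin M F S σ ↔ (x ∈ M.E ∧ (∀ j ∈ S, j ∉ σ → x ∈ F j)) ∧ ¬ ∃ j ∈ σ, x ∈ F j := by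
  simp [Amin, Finset.mem_sdiff, Finset.mem_filter, mem_Fplus]

lemma Fplus_subset {M : FinMatroid α} {F : Fin m → Finset α} (hF : ∀ i, F i ⊆ M.E)
    (σ : Finset (Fin m)) : Fplus F σ ⊆ M.E :=
  Finset.sup_le fun i _ => hF i

lemma Amin_subset {M : FinMatroid α} {F : Fin m → Finset α} {S σ : Finset (Fin m)} :
    Amin M F S σ ⊆ M.E := (sdiff_subset).trans (filter_subset _ _)

lemma Fplus_insert {F : Fin m → Finset α} {σ : Finset (Fin m)} {i : Fin m} :
    Fplus F (insert i σ) = F i ∪ Fplus F σ := Finset.sup_insert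

/-- Key pairing inequality coming from submodularity. -/
lemma pair_le (M : FinMatroid α) (F : Fin m → Finset α) (hF : ∀ i, F i ⊆ M.E)
    {S σ : Finset (Fin m)} {i : Fin m} (hiS : i ∉ S) (hσ : σ ⊆ S) :
    tterm M F (insert i S) σ + tterm M F (insert i S) (insert i σ) ≤ tterm M F S σ := by
  classical
  set G : Finset α := M.E.filter (fun x => ∀ j ∈ S, j ∉ σ → x ∈ F j) with hG
  set C : Finset α := Fplus F σ with hC
  set H : Finset α := F i with hH
  have hiσ : i ∉ σ := fun h => hiS (hσ h)
  have hGE : G ⊆ M.E := filter_subset _ _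
  have hCE : C ⊆ M.E := Fplus_subset hF σ
  have hHE : H ⊆ M.E := hF i
  -- identify the three Amin sets
  have e1 : Amin M F (insert i S) σ = (G ∩ H) \ C := by
    ext x
    simp only [mem_Amin, hG, mem_sdiff, mem_inter, mem_filter, mem_insert, mem_Fplus, hC, hH]
    constructor
    · rintro ⟨⟨hxE, hall⟩, hno⟩
      exact ⟨⟨⟨hxE, fun j hj hjσ => hall j (Or.inr hj) hjσ⟩, hall i (Or.inl rfl) hiσ⟩, hno⟩
    · rintro ⟨⟨⟨hxE, hall⟩, hxH⟩, hno⟩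
      refine ⟨⟨hxE, fun j hj hjσ => ?_⟩, hno⟩
      rcases hj with rfl | hj
      · exact hxH
      · exact hall j hj hjσ
  have e2 : Amin M F (insert i S) (insert i σ) = G \ (H ∪ C) := by
    ext x
    simp only [mem_Amin, hG, mem_sdiff, mem_filter, mem_insert, mem_union, mem_Fplus, hC, hH]
    constructor
    · rintro ⟨⟨hxE, hall⟩, hno⟩
      refine ⟨⟨hxE, fun j hj hjσ => hall j (Or.inr hj) (by simp [hjσ]; rintro rfl; exact hiS hj)⟩, ?_⟩
      push_neg at hno ⊢
      exact ⟨hno i (Or.inl rfl), fun j hj => hno j (Or.inr hj)⟩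
    · rintro ⟨⟨hxE, hall⟩, hno⟩
      push_neg at hno
      refine ⟨⟨hxE, fun j hj hjσ => ?_⟩, ?_⟩
      · rcases hj with rfl | hj
        · exact absurd (Or.inl rfl) hjσ
        · exact hall j hj (fun h => hjσ (Or.inr h))
      · push_neg
        intro j hj
        rcases hj with rfl | hj'
        · exact hno.1
        · exact hno.2 j hj'
  have eσ : Amin M F S σ = G \ C := rfl
  -- rewrite the three tterm values
  have u1 : Amin M F (insert i S) σ ∪ Fplus F σ = (G ∩ H) ∪ C := by
    rw [e1, ← hC, sdiff_union_self_eq_union]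
  have u2 : Amin M F (insert i S) (insert i σ) ∪ Fplus F (insert i σ) = G ∪ (H ∪ C) := by
    rw [e2, Fplus_insert, ← hC, ← hH, sdiff_union_self_eq_union]
  have u3 : Amin M F S σ ∪ Fplus F σ = G ∪ C := by
    rw [eσ, ← hC, sdiff_union_self_eq_union]
  have hP : Fplus F (insert i σ) = H ∪ C := by rw [Fplus_insert, ← hC, ← hH]
  -- submodularity
  have hsub := M.r_submod (show G ∪ C ⊆ M.E from union_subset hGE hCE)
    (show H ∪ C ⊆ M.E from union_subset hHE hCE)
  have eu : (G ∪ C) ∪ (H ∪ C) = G ∪ (H ∪ C) := by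
    ext x; simp only [mem_union]; tauto
  have ei : (G ∪ C) ∩ (H ∪ C) = (G ∩ H) ∪ C := by
    ext x; simp only [mem_union, mem_inter]; tauto
  rw [eu, ei] at hsub
  -- monotonicity facts for ℕ-subtraction
  have m1 : M.r C ≤ M.r ((G ∩ H) ∪ C) :=
    M.r_mono subset_union_right (union_subset ((inter_subset_left).trans hGE) hCE)
  have m2 : M.r (H ∪ C) ≤ M.r (G ∪ (H ∪ C)) :=
    M.r_mono subset_union_right (union_subset hGE (union_subset hHE hCE))
  have m3 : M.r C ≤ M.r (G ∪ C) := M.r_mono subset_union_right (union_subset hGE hCE)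
  simp only [tterm]
  rw [u1, u2, u3, hP, ← hC]
  omega

lemma TT_empty (M : FinMatroid α) (F : Fin m → Finset α) (hF : ∀ i, F i ⊆ M.E) :
    TT M F ∅ = M.r M.E := by
  simp only [TT, powerset_empty, sum_singleton, tterm]
  have e1 : Fplus F (∅ : Finset (Fin m)) = ∅ := rfl
  have e2 : Amin M F ∅ ∅ = M.E := by
    ext x; simp [mem_Amin, e1, mem_Fplus]
  rw [e1, e2, union_empty, M.r_empty]
  omega

lemma TT_insert_le (M : FinMatroid α) (F : Fin m → Finset α) (hF : ∀ i, F i ⊆ M.E)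
    {S : Finset (Fin m)} {i : Fin m} (hiS : i ∉ S) :
    TT M F (insert i S) ≤ TT M F S := by
  rw [TT, Finset.sum_powerset_insert hiS]
  rw [← Finset.sum_add_distrib]
  exact Finset.sum_le_sum fun σ hσ => pair_le M F hF hiS (mem_powerset.mp hσ)

lemma TT_union_le (M : FinMatroid α) (F : Fin m → Finset α) (hF : ∀ i, F i ⊆ M.E)
    (D S : Finset (Fin m)) : TT M F (S ∪ D) ≤ TT M F S := by
  induction D using Finset.induction_on with
  | empty => simp
  | @insert a D ha IH =>
    have e : S ∪ insert a D = insert a (S ∪ D) := by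
      ext x; simp only [mem_union, mem_insert]; tauto
    rw [e]
    by_cases haSD : a ∈ S ∪ D
    · rw [insert_eq_self.mpr haSD]; exact IH
    · exact (TT_insert_le M F hF haSD).trans IH

lemma TT_mono (M : FinMatroid α) (F : Fin m → Finset α) (hF : ∀ i, F i ⊆ M.E)
    {S S' : Finset (Fin m)} (h : S ⊆ S') : TT M F S' ≤ TT M F S := by
  have := TT_union_le M F hF (S' \ S) S
  rwa [union_sdiff_of_subset h] at this

lemma TT_le (M : FinMatroid α) (F : Fin m → Finset α) (hF : ∀ i, F i ⊆ M.E)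
    (S : Finset (Fin m)) : TT M F S ≤ M.r M.E := by
  have h1 := TT_mono M F hF (empty_subset S)
  rwa [TT_empty M F hF] at h1

/-- Forward direction: a base meeting every `F i` in full rank forces the sum to be `r E`. -/
lemma lemA (M : FinMatroid α) (F : Fin m → Finset α) (hF : ∀ i, F i ⊆ M.E)
    {S : Finset (Fin m)} {B : Finset α} (hB : M.Base B)
    (hcnt : ∀ i ∈ S, (B ∩ F i).card = M.r (F i)) : TT M F S = M.r M.E := by
  classical
  have hBE : B ⊆ M.E := hB.1.1
  -- `B ∩ F_σ⁺` spans `F_σ⁺`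
  have span : ∀ σ : Finset (Fin m), σ ⊆ S → M.r (B ∩ Fplus F σ) = M.r (Fplus F σ) := by
    intro σ
    induction σ using Finset.induction_on with
    | empty =>
      intro _
      have : Fplus F (∅ : Finset (Fin m)) = ∅ := rfl
      rw [this]; simp
    | @insert j σ hj IH =>
      intro hsub
      have hjS : j ∈ S := hsub (mem_insert_self j σ)
      have hσS : σ ⊆ S := (subset_insert j σ).trans hsub
      have IH' := IH hσS
      have hPE : Fplus F σ ⊆ M.E := Fplus_subset hF σ
      have hFj : F j ⊆ M.E := hF j
      have hXindep : M.Indep (B ∩ F j) := M.indep_subset hB.1 inter_subset_left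
      have hrX : M.r (B ∩ F j) = M.r (F j) := by rw [hXindep.2, hcnt j hjS]
      have s1 : M.r (Fplus F σ ∪ (B ∩ F j) ∪ F j) ≤ M.r (Fplus F σ ∪ (B ∩ F j)) := by
        apply M.span_lemma (inter_subset_left.trans hBE) hFj hPE
        have e : B ∩ F j ∪ F j = F j := union_eq_right.mpr inter_subset_right
        rw [e, hrX]
      have e1 : F j ∪ Fplus F σ = Fplus F σ ∪ (B ∩ F j) ∪ F j := by
        ext x; simp only [mem_union, mem_inter]; tauto
      have s2 : M.r ((B ∩ F j) ∪ (B ∩ Fplus F σ) ∪ Fplus F σ)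
          ≤ M.r ((B ∩ F j) ∪ (B ∩ Fplus F σ)) := by
        apply M.span_lemma (inter_subset_left.trans hBE) hPE (inter_subset_left.trans hBE)
        have e : B ∩ Fplus F σ ∪ Fplus F σ = Fplus F σ := union_eq_right.mpr inter_subset_right
        rw [e, ← IH']
      have e2 : Fplus F σ ∪ (B ∩ F j) = (B ∩ F j) ∪ (B ∩ Fplus F σ) ∪ Fplus F σ := by
        ext x; simp only [mem_union, mem_inter]; tauto
      have e3 : (B ∩ F j) ∪ (B ∩ Fplus F σ) = B ∩ (F j ∪ Fplus F σ) := by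
        ext x; simp only [mem_union, mem_inter]; tauto
      have e4 : Fplus F (insert j σ) = F j ∪ Fplus F σ := Fplus_insert
      have hlow : M.r (F j ∪ Fplus F σ) ≤ M.r (B ∩ (F j ∪ Fplus F σ)) := by
        calc M.r (F j ∪ Fplus F σ) = M.r (Fplus F σ ∪ (B ∩ F j) ∪ F j) := by rw [← e1]
        _ ≤ M.r (Fplus F σ ∪ (B ∩ F j)) := s1
        _ = M.r ((B ∩ F j) ∪ (B ∩ Fplus F σ) ∪ Fplus F σ) := by rw [← e2]
        _ ≤ M.r ((B ∩ F j) ∪ (B ∩ Fplus F σ)) := s2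
        _ = M.r (B ∩ (F j ∪ Fplus F σ)) := by rw [e3]
      rw [e4]
      exact le_antisymm
        (M.r_mono inter_subset_right (union_subset hFj hPE)) hlow
  -- each part of the partition meets `B` in at most `tterm` elements
  have perσ : ∀ σ ∈ S.powerset, (B ∩ Amin M F S σ).card ≤ tterm M F S σ := by
    intro σ hσ
    have hσS := mem_powerset.mp hσ
    have hspan := span σ hσS
    have hPE : Fplus F σ ⊆ M.E := Fplus_subset hF σ
    have hAE : Amin M F S σ ⊆ M.E := Amin_subset
    have hIsub : B ∩ Amin M F S σ ⊆ B := inter_subset_left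
    have hXsub : B ∩ Fplus F σ ⊆ B := inter_subset_left
    have hXindep := M.indep_subset hB.1 hXsub
    have hd0 : Disjoint (Amin M F S σ) (Fplus F σ) := sdiff_disjoint
    have hdisj : Disjoint (B ∩ Amin M F S σ) (B ∩ Fplus F σ) :=
      hd0.mono inter_subset_right inter_subset_right
    have hIXindep := M.indep_subset hB.1 (union_subset hIsub hXsub)
    have hcardu := card_union_of_disjoint hdisj
    have h1 : M.r (B ∩ Amin M F S σ ∪ B ∩ Fplus F σ) ≤ M.r (Amin M F S σ ∪ Fplus F σ) :=
      M.r_mono (union_subset_union inter_subset_right inter_subset_right)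
        (union_subset hAE hPE)
    have h2 := hIXindep.2
    have h3 := hXindep.2
    simp only [tterm]
    omega
  -- `B` is partitioned by the sets `Amin`
  have hpart : B.card = ∑ σ ∈ S.powerset, (B ∩ Amin M F S σ).card := by
    have hfib := Finset.card_eq_sum_card_fiberwise
      (f := fun x => S.filter fun j => x ∉ F j) (s := B) (t := S.powerset)
      (fun x _ => mem_powerset.mpr (filter_subset _ _))
    rw [hfib]
    refine Finset.sum_congr rfl fun σ hσ => ?_
    have hσS := mem_powerset.mp hσ
    congr 1
    ext x
    simp only [mem_filter, mem_inter, mem_Amin]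
    constructor
    · rintro ⟨hxB, hfe⟩
      refine ⟨hxB, ⟨hBE hxB, fun j hjS hjσ => ?_⟩, ?_⟩
      · by_contra hxF
        rw [← hfe] at hjσ
        exact hjσ (mem_filter.mpr ⟨hjS, hxF⟩)
      · rintro ⟨j, hjσ, hxFj⟩
        rw [← hfe] at hjσ
        exact (mem_filter.mp hjσ).2 hxFj
    · rintro ⟨hxB, ⟨hxE, hall⟩, hno⟩
      refine ⟨hxB, ?_⟩
      ext j
      simp only [mem_filter]
      constructor
      · rintro ⟨hjS, hxF⟩
        by_contra hjσ
        exact hxF (hall j hjS hjσ)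
      · intro hjσ
        exact ⟨hσS hjσ, fun hxF => hno ⟨j, hjσ, hxF⟩⟩
  have hsum : B.card ≤ TT M F S := by
    rw [hpart, TT]; exact Finset.sum_le_sum perσ
  have hle := TT_le M F hF S
  have hcard := M.base_card hB
  omega

/-- Converse direction, proved by induction on the number of active indices. -/
lemma lemB : ∀ (k : ℕ) (S : Finset (Fin m)), S.card = k → ∀ (M : FinMatroid α)
    (F : Fin m → Finset α), (∀ i, F i ⊆ M.E) → TT M F S = M.r M.E →
    ∃ B, M.Base B ∧ ∀ i ∈ S, (B ∩ F i).card = M.r (F i) := by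
  intro k
  induction k with
  | zero =>
    intro S hS M F hF _
    obtain ⟨B, hB⟩ := M.exists_base
    rw [card_eq_zero] at hS; subst hS
    exact ⟨B, hB, by simp⟩
  | succ k IH =>
    intro S hS M F hF hTT
    have hne : S.Nonempty := card_pos.mp (by omega)
    obtain ⟨i, hi⟩ := hne
    obtain ⟨T, hiT, rfl⟩ : ∃ T, i ∉ T ∧ S = insert i T :=
      ⟨S.erase i, notMem_erase i S, (insert_erase hi).symm⟩
    have hT : T.card = k := by rw [card_insert_of_notMem hiT] at hS; omega
    have hH : F i ⊆ M.E := hF i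
    have hMHE : (M.restrict (F i)).E = F i := inter_eq_left.mpr hH
    have hMCr : ∀ X : Finset α, (M.contract (F i)).r X = M.r (X ∪ F i) - M.r (F i) := by
      intro X
      show M.r (X ∪ F i ∩ M.E) - M.r (F i ∩ M.E) = _
      rw [inter_eq_left.mpr hH]
    have hF' : ∀ j, (fun j => F j ∩ F i) j ⊆ (M.restrict (F i)).E := by
      intro j x hx
      have hx' := mem_inter.mp hx
      exact mem_inter.mpr ⟨hx'.2, hH hx'.2⟩
    have hF'' : ∀ j, (fun j => F j \ F i) j ⊆ (M.contract (F i)).E := by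
      intro j
      exact sdiff_subset_sdiff (hF j) (Finset.Subset.refl _)
    -- Fplus computations
    have eplus' : ∀ σ : Finset (Fin m), Fplus (fun j => F j ∩ F i) σ = Fplus F σ ∩ F i := by
      intro σ; ext x; simp only [mem_Fplus, mem_inter]; tauto
    have eplus'' : ∀ σ : Finset (Fin m), Fplus (fun j => F j \ F i) σ = Fplus F σ \ F i := by
      intro σ; ext x; simp only [mem_Fplus, mem_sdiff]; tauto
    -- Amin computations
    have eA' : ∀ σ ⊆ T, Amin (M.restrict (F i)) (fun j => F j ∩ F i) T σ
        = Amin M F (insert i T) σ := by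
      intro σ hσ
      have hiσ : i ∉ σ := fun h => hiT (hσ h)
      ext x
      simp only [mem_Amin, mem_inter, mem_insert,
        show (M.restrict (F i)).E = F i ∩ M.E from rfl]
      constructor
      · rintro ⟨⟨⟨hxFi, hxE⟩, hall⟩, hno⟩
        refine ⟨⟨hxE, fun j hj hjσ => ?_⟩, ?_⟩
        · rcases hj with rfl | hj
          · exact hxFi
          · exact (hall j hj hjσ).1
        · rintro ⟨j, hjσ, hxFj⟩
          exact hno ⟨j, hjσ, hxFj, hxFi⟩
      · rintro ⟨⟨hxE, hall⟩, hno⟩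
        have hxFi : x ∈ F i := hall i (Or.inl rfl) hiσ
        refine ⟨⟨⟨hxFi, hxE⟩, fun j hj hjσ => ⟨hall j (Or.inr hj) hjσ, hxFi⟩⟩, ?_⟩
        rintro ⟨j, hjσ, hxFj, _⟩
        exact hno ⟨j, hjσ, hxFj⟩
    have eA'' : ∀ σ ⊆ T, Amin (M.contract (F i)) (fun j => F j \ F i) T σ
        = Amin M F (insert i T) (insert i σ) := by
      intro σ hσ
      ext x
      simp only [mem_Amin, mem_sdiff, mem_insert,
        show (M.contract (F i)).E = M.E \ F i from rfl]
      constructor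
      · rintro ⟨⟨⟨hxE, hxFi⟩, hall⟩, hno⟩
        refine ⟨⟨hxE, fun j hj hjσ => ?_⟩, ?_⟩
        · rcases hj with rfl | hj
          · exact absurd (Or.inl rfl) hjσ
          · exact (hall j hj (fun h => hjσ (Or.inr h))).1
        · rintro ⟨j, hjσ, hxFj⟩
          rcases hjσ with rfl | hjσ
          · exact hxFi hxFj
          · exact hno ⟨j, hjσ, hxFj, hxFi⟩
      · rintro ⟨⟨hxE, hall⟩, hno⟩
        have hxFi : x ∉ F i := fun h => hno ⟨i, Or.inl rfl, h⟩
        refine ⟨⟨⟨hxE, hxFi⟩, fun j hj hjσ => ?_⟩, ?_⟩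
        · have hji : j ≠ i := fun h => hiT (h ▸ hj)
          exact ⟨hall j (Or.inr hj) (by rintro (h | h); exact hji h; exact hjσ h), hxFi⟩
        · rintro ⟨j, hjσ, hxFj, _⟩
          exact hno ⟨j, Or.inr hjσ, hxFj⟩
    -- termwise comparison with the restriction
    have K6 : ∀ σ ⊆ T, tterm M F (insert i T) σ
        ≤ tterm (M.restrict (F i)) (fun j => F j ∩ F i) T σ := by
      intro σ hσ
      have hiσ : i ∉ σ := fun h => hiT (hσ h)
      have hCE : Fplus F σ ⊆ M.E := Fplus_subset hF σ
      have hAE : Amin M F (insert i T) σ ⊆ M.E := Amin_subset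
      have hAH : Amin M F (insert i T) σ ⊆ F i := by
        intro x hx
        exact (mem_Amin.mp hx).1.2 i (mem_insert_self i T) hiσ
      have hAC : Disjoint (Amin M F (insert i T) σ) (Fplus F σ) := sdiff_disjoint
      have hsub := M.r_submod
        (show Amin M F (insert i T) σ ∪ Fplus F σ ∩ F i ⊆ M.E from
          union_subset hAE (inter_subset_left.trans hCE))
        hCE
      have eu : (Amin M F (insert i T) σ ∪ Fplus F σ ∩ F i) ∪ Fplus F σ
          = Amin M F (insert i T) σ ∪ Fplus F σ := by
        ext x; simp only [mem_union, mem_inter]; tauto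
      have ei : (Amin M F (insert i T) σ ∪ Fplus F σ ∩ F i) ∩ Fplus F σ
          = Fplus F σ ∩ F i := by
        ext x
        simp only [mem_union, mem_inter]
        constructor
        · rintro ⟨h1 | h2, hxC⟩
          · exact absurd hxC (Finset.disjoint_left.mp hAC h1)
          · exact h2
        · rintro ⟨hxC, hxFi⟩
          exact ⟨Or.inr ⟨hxC, hxFi⟩, hxC⟩
      rw [eu, ei] at hsub
      have m1 : M.r (Fplus F σ ∩ F i) ≤ M.r (Amin M F (insert i T) σ ∪ Fplus F σ ∩ F i) :=
        M.r_mono subset_union_right (union_subset hAE (inter_subset_left.trans hCE))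
      have m2 : M.r (Fplus F σ) ≤ M.r (Amin M F (insert i T) σ ∪ Fplus F σ) :=
        M.r_mono subset_union_right (union_subset hAE hCE)
      have hrhs : tterm (M.restrict (F i)) (fun j => F j ∩ F i) T σ
          = M.r (Amin M F (insert i T) σ ∪ Fplus F σ ∩ F i) - M.r (Fplus F σ ∩ F i) := by
        simp only [tterm, eA' σ hσ, eplus']
        rfl
      rw [hrhs]
      simp only [tterm]
      omega
    -- termwise identification with the contraction
    have K7 : ∀ σ ⊆ T, tterm M F (insert i T) (insert i σ)
        = tterm (M.contract (F i)) (fun j => F j \ F i) T σ := by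
      intro σ hσ
      have hCE : Fplus F σ ⊆ M.E := Fplus_subset hF σ
      have hAE : Amin M F (insert i T) (insert i σ) ⊆ M.E := Amin_subset
      have e5 : Amin M F (insert i T) (insert i σ) ∪ (Fplus F σ \ F i) ∪ F i
          = Amin M F (insert i T) (insert i σ) ∪ (F i ∪ Fplus F σ) := by
        ext x; simp only [mem_union, mem_sdiff]; tauto
      have e6 : (Fplus F σ \ F i) ∪ F i = F i ∪ Fplus F σ := by
        ext x; simp only [mem_union, mem_sdiff]; tauto
      have hrhs : tterm (M.contract (F i)) (fun j => F j \ F i) T σ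
          = (M.r (Amin M F (insert i T) (insert i σ) ∪ (F i ∪ Fplus F σ)) - M.r (F i))
            - (M.r (F i ∪ Fplus F σ) - M.r (F i)) := by
        simp only [tterm, eA'' σ hσ, eplus'', hMCr]
        rw [e5, e6]
      have m1 : M.r (F i) ≤ M.r (F i ∪ Fplus F σ) :=
        M.r_mono subset_union_left (union_subset hH hCE)
      have m2 : M.r (F i ∪ Fplus F σ)
          ≤ M.r (Amin M F (insert i T) (insert i σ) ∪ (F i ∪ Fplus F σ)) :=
        M.r_mono subset_union_right (union_subset hAE (union_subset hH hCE))
      rw [hrhs]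
      simp only [tterm, Fplus_insert]
      omega
    -- ground set ranks of the two minors
    have hg : (M.restrict (F i)).r (M.restrict (F i)).E = M.r (F i) := by
      show M.r (F i ∩ M.E) = M.r (F i)
      rw [inter_eq_left.mpr hH]
    have hgC : (M.contract (F i)).r (M.contract (F i)).E = M.r M.E - M.r (F i) := by
      have e : (M.E \ F i) ∪ F i = M.E := sdiff_union_of_subset hH
      show (M.contract (F i)).r (M.E \ F i) = _
      rw [hMCr, e]
    have hHE : M.r (F i) ≤ M.r M.E := M.r_mono hH (Finset.Subset.refl _)
    -- split the big sum and squeeze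
    have hsplit : TT M F (insert i T)
        = (∑ σ ∈ T.powerset, tterm M F (insert i T) σ)
          + ∑ σ ∈ T.powerset, tterm M F (insert i T) (insert i σ) := by
      rw [TT, Finset.sum_powerset_insert hiT]
    have hle1 : ∑ σ ∈ T.powerset, tterm M F (insert i T) σ
        ≤ TT (M.restrict (F i)) (fun j => F j ∩ F i) T :=
      Finset.sum_le_sum fun σ hσ => K6 σ (mem_powerset.mp hσ)
    have heq2 : ∑ σ ∈ T.powerset, tterm M F (insert i T) (insert i σ)
        = TT (M.contract (F i)) (fun j => F j \ F i) T :=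
      Finset.sum_congr rfl fun σ hσ => K7 σ (mem_powerset.mp hσ)
    have hTTH_le : TT (M.restrict (F i)) (fun j => F j ∩ F i) T ≤ M.r (F i) := by
      have := TT_le (M.restrict (F i)) (fun j => F j ∩ F i) hF' T
      rwa [hg] at this
    have hTTC_le : TT (M.contract (F i)) (fun j => F j \ F i) T ≤ M.r M.E - M.r (F i) := by
      have := TT_le (M.contract (F i)) (fun j => F j \ F i) hF'' T
      rwa [hgC] at this
    have hTTH : TT (M.restrict (F i)) (fun j => F j ∩ F i) T
        = (M.restrict (F i)).r (M.restrict (F i)).E := by rw [hg]; omega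
    have hTTC : TT (M.contract (F i)) (fun j => F j \ F i) T
        = (M.contract (F i)).r (M.contract (F i)).E := by rw [hgC]; omega
    -- modular pairs
    have modular : ∀ j ∈ T, M.r (F j ∩ F i) + M.r (F j ∪ F i) = M.r (F j) + M.r (F i) := by
      intro j hjT
      have hij : j ≠ i := fun h => hiT (h ▸ hjT)
      have hinotj : i ∉ ({j} : Finset (Fin m)) := fun h => hij (mem_singleton.mp h).symm
      have h1 : TT M F {j} = M.r M.E := by
        have hmono := TT_mono M F hF
          (show ({j} : Finset (Fin m)) ⊆ insert i T from
            singleton_subset_iff.mpr (mem_insert_of_mem hjT))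
        rw [hTT] at hmono
        exact le_antisymm (TT_le M F hF _) hmono
      have h2 : TT M F (insert i {j}) = M.r M.E := by
        have hmono := TT_mono M F hF
          (show insert i ({j} : Finset (Fin m)) ⊆ insert i T from
            insert_subset_insert i (singleton_subset_iff.mpr hjT))
        rw [hTT] at hmono
        exact le_antisymm (TT_le M F hF _) hmono
      have hone : (∅ : Finset (Fin m)) ≠ {j} := (singleton_ne_empty j).symm
      have hpow : ({j} : Finset (Fin m)).powerset = {∅, {j}} := by
        ext σ; simp [Finset.mem_powerset, Finset.subset_singleton_iff]
      have e7 : TT M F {j} = tterm M F {j} ∅ + tterm M F {j} {j} := by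
        rw [TT, hpow, sum_pair hone]
      have e8 : TT M F (insert i {j})
          = (tterm M F (insert i {j}) ∅ + tterm M F (insert i {j}) {j})
            + (tterm M F (insert i {j}) (insert i ∅)
              + tterm M F (insert i {j}) (insert i {j})) := by
        rw [TT, Finset.sum_powerset_insert hinotj, hpow, sum_pair hone, sum_pair hone]
      have hp1 := pair_le M F hF hinotj (empty_subset {j})
      have hp2 := pair_le M F hF hinotj (Finset.Subset.refl {j})
      have hkey : tterm M F (insert i {j}) ∅ + tterm M F (insert i {j}) (insert i ∅)
          = tterm M F {j} ∅ := by omega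
      -- compute the three values
      have v1 : tterm M F {j} ∅ = M.r (F j) := by
        have eam : Amin M F {j} ∅ = F j := by
          ext x
          simp only [mem_Amin, mem_singleton]
          constructor
          · rintro ⟨⟨_, hall⟩, _⟩
            exact hall j rfl (notMem_empty j)
          · intro hx
            exact ⟨⟨hF j hx, fun l hl _ => hl ▸ hx⟩, by rintro ⟨l, hl, _⟩; exact notMem_empty l hl⟩
        have ep : Fplus F (∅ : Finset (Fin m)) = ∅ := rfl
        simp only [tterm, eam, ep, union_empty, M.r_empty]
        omega
      have v2 : tterm M F (insert i {j}) ∅ = M.r (F j ∩ F i) := by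
        have eam : Amin M F (insert i {j}) ∅ = F j ∩ F i := by
          ext x
          simp only [mem_Amin, mem_insert, mem_singleton, mem_inter]
          constructor
          · rintro ⟨⟨_, hall⟩, _⟩
            exact ⟨hall j (Or.inr rfl) (notMem_empty j), hall i (Or.inl rfl) (notMem_empty i)⟩
          · rintro ⟨hxj, hxi⟩
            refine ⟨⟨hF i hxi, fun l hl _ => ?_⟩, by rintro ⟨l, hl, _⟩; exact notMem_empty l hl⟩
            rcases hl with rfl | rfl
            · exact hxi
            · exact hxj
        have ep : Fplus F (∅ : Finset (Fin m)) = ∅ := rfl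
        simp only [tterm, eam, ep, union_empty, M.r_empty]
        omega
      have v3 : tterm M F (insert i {j}) (insert i ∅) = M.r (F j ∪ F i) - M.r (F i) := by
        have ep : Fplus F (insert i (∅ : Finset (Fin m))) = F i := by
          rw [Fplus_insert]
          show F i ∪ ∅ = F i
          exact union_empty _
        have eam : Amin M F (insert i {j}) (insert i ∅) = F j \ F i := by
          ext x
          simp only [mem_Amin, mem_insert, mem_singleton, mem_sdiff, notMem_empty, or_false]
          constructor
          · rintro ⟨⟨_, hall⟩, hno⟩
            refine ⟨hall j (Or.inr rfl) (fun h => hij h), fun hxi => hno ⟨i, rfl, hxi⟩⟩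
          · rintro ⟨hxj, hxi⟩
            refine ⟨⟨hF j hxj, fun l hl hlni => ?_⟩, ?_⟩
            · rcases hl with rfl | rfl
              · exact absurd rfl hlni
              · exact hxj
            · rintro ⟨l, rfl, hxl⟩
              exact hxi hxl
        have eun : F j \ F i ∪ F i = F j ∪ F i := sdiff_union_self_eq_union
        simp only [tterm, eam, ep, eun]
      have mr : M.r (F i) ≤ M.r (F j ∪ F i) :=
        M.r_mono subset_union_right (union_subset (hF j) hH)
      rw [v1, v2, v3] at hkey
      omega
    -- apply the induction hypothesis to both minors
    obtain ⟨B₁, hB₁, hcnt₁⟩ := IH T hT (M.restrict (F i)) (fun j => F j ∩ F i) hF' hTTH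
    obtain ⟨B₂, hB₂, hcnt₂⟩ := IH T hT (M.contract (F i)) (fun j => F j \ F i) hF'' hTTC
    have hB1E : B₁ ⊆ F i ∩ M.E := hB₁.1.1
    have hB1H : B₁ ⊆ F i := hB1E.trans inter_subset_left
    have hB1ME : B₁ ⊆ M.E := hB1E.trans inter_subset_right
    have hB1indep : M.Indep B₁ := ⟨hB1ME, hB₁.1.2⟩
    have hB1card : B₁.card = M.r (F i) := by
      have := (M.restrict (F i)).base_card hB₁
      rwa [hg] at this
    have hB2E : B₂ ⊆ M.E \ F i := hB₂.1.1
    have hB2ME : B₂ ⊆ M.E := hB2E.trans sdiff_subset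
    have hB2ind : M.r (B₂ ∪ F i) - M.r (F i) = B₂.card := by
      have h := hB₂.1.2
      rwa [hMCr] at h
    have hB2card : B₂.card = M.r M.E - M.r (F i) := by
      have := (M.contract (F i)).base_card hB₂
      rwa [hgC] at this
    have hdisjB : Disjoint B₁ B₂ := by
      rw [Finset.disjoint_left]
      intro x hx1 hx2
      exact (mem_sdiff.mp (hB2E hx2)).2 (hB1H hx1)
    have hcardu := card_union_of_disjoint hdisjB
    have hrFiu : M.r (F i) ≤ M.r (B₂ ∪ F i) :=
      M.r_mono subset_union_right (union_subset hB2ME hH)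
    have hBunion_r : M.r (B₁ ∪ B₂) = B₁.card + B₂.card := by
      have hle := M.r_le_card (union_subset hB1ME hB2ME)
      have hsub := M.r_submod (union_subset hB1ME hB2ME) hH
      have e9 : B₁ ∪ B₂ ∪ F i = B₂ ∪ F i := by
        ext x
        simp only [mem_union]
        constructor
        · rintro ((h | h) | h)
          · exact Or.inr (hB1H h)
          · exact Or.inl h
          · exact Or.inr h
        · rintro (h | h)
          · exact Or.inl (Or.inr h)
          · exact Or.inr h
      have e10 : (B₁ ∪ B₂) ∩ F i = B₁ := by
        ext x
        simp only [mem_inter, mem_union]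
        constructor
        · rintro ⟨h | h, hxFi⟩
          · exact h
          · exact absurd hxFi (mem_sdiff.mp (hB2E h)).2
        · intro h
          exact ⟨Or.inl h, hB1H h⟩
      rw [e9, e10] at hsub
      have h1 := hB1indep.2
      omega
    have hBcard : (B₁ ∪ B₂).card = M.r M.E := by omega
    have hBbase : M.Base (B₁ ∪ B₂) :=
      M.base_of_indep_card ⟨union_subset hB1ME hB2ME, by rw [hBunion_r, hcardu]⟩ hBcard
    refine ⟨B₁ ∪ B₂, hBbase, ?_⟩
    intro j hj
    rcases mem_insert.mp hj with rfl | hjT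
    · have e11 : (B₁ ∪ B₂) ∩ F j = B₁ := by
        ext x
        simp only [mem_inter, mem_union]
        constructor
        · rintro ⟨h | h, hxFi⟩
          · exact h
          · exact absurd hxFi (mem_sdiff.mp (hB2E h)).2
        · intro h
          exact ⟨Or.inl h, hB1H h⟩
      rw [e11]
      exact hB1card
    · have e12 : (B₁ ∪ B₂) ∩ F j = (B₁ ∩ (F j ∩ F i)) ∪ (B₂ ∩ (F j \ F i)) := by
        ext x
        simp only [mem_inter, mem_union, mem_sdiff]
        constructor
        · rintro ⟨h | h, hxFj⟩
          · exact Or.inl ⟨h, hxFj, hB1H h⟩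
          · exact Or.inr ⟨h, hxFj, (mem_sdiff.mp (hB2E h)).2⟩
        · rintro (⟨h, hxFj, _⟩ | ⟨h, hxFj, _⟩)
          · exact ⟨Or.inl h, hxFj⟩
          · exact ⟨Or.inr h, hxFj⟩
      have hd12 : Disjoint (B₁ ∩ (F j ∩ F i)) (B₂ ∩ (F j \ F i)) :=
        hdisjB.mono inter_subset_left inter_subset_left
      have hc1 : (B₁ ∩ (F j ∩ F i)).card = M.r (F j ∩ F i) := by
        have := hcnt₁ j hjT
        exact this
      have hc2 : (B₂ ∩ (F j \ F i)).card = M.r (F j ∪ F i) - M.r (F i) := by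
        have h := hcnt₂ j hjT
        rw [hMCr, sdiff_union_self_eq_union] at h
        exact h
      have hmod := modular j hjT
      have mr : M.r (F i) ≤ M.r (F j ∪ F i) :=
        M.r_mono subset_union_right (union_subset (hF j) hH)
      rw [e12, card_union_of_disjoint hd12, hc1, hc2]
      omega

end Aux

/-- There is a base `B` with `|B ∩ F i| = r (F i)` for all `i` iff
`∑_{σ ⊆ [m]} r_{M/F_σ⁺}(F_σ⁻ \ F_σ⁺) = r E`. -/
theorem statement7 {α : Type*} [DecidableEq α] {m : ℕ} (M : FinMatroid α)
    (F : Fin m → Finset α) (hF : ∀ i, F i ⊆ M.E) :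
    (∃ B : Finset α, M.Base B ∧ ∀ i, (B ∩ F i).card = M.r (F i)) ↔
      ∑ σ : Finset (Fin m), (M.contract (Fplus F σ)).r (Fminus M F σ \ Fplus F σ)
        = M.r M.E := by
  classical
  have hterm : ∀ σ : Finset (Fin m),
      (M.contract (Fplus F σ)).r (Fminus M F σ \ Fplus F σ) = tterm M F univ σ := by
    intro σ
    have hP : Fplus F σ ⊆ M.E := Fplus_subset hF σ
    have h1 : (M.contract (Fplus F σ)).r (Fminus M F σ \ Fplus F σ)
        = M.r ((Fminus M F σ \ Fplus F σ) ∪ Fplus F σ) - M.r (Fplus F σ) := by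
      show M.r (_ ∪ Fplus F σ ∩ M.E) - M.r (Fplus F σ ∩ M.E) = _
      rw [inter_eq_left.mpr hP]
    have h2 : Amin M F univ σ = Fminus M F σ \ Fplus F σ := by
      ext x; simp [Amin, Fminus]
    rw [h1, ← h2]
    rfl
  have hsum : (∑ σ : Finset (Fin m),
      (M.contract (Fplus F σ)).r (Fminus M F σ \ Fplus F σ)) = TT M F univ := by
    rw [TT, powerset_univ]
    exact Finset.sum_congr rfl fun σ _ => hterm σ
  constructor
  · rintro ⟨B, hB, hcnt⟩
    rw [hsum]
    exact lemA M F hF hB (fun i _ => hcnt i)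
  · intro h
    rw [hsum] at h
    obtain ⟨B, hB, hcnt⟩ := lemB (Finset.univ : Finset (Fin m)).card univ rfl M F hF h
    exact ⟨B, hB, fun i => hcnt i (mem_univ i)⟩
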